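/- Assume there exists i ∈ k with i² = −1. Let A ∈ O(n,k,β) satisfy A² = −I_n. Then n is even and there exists X ∈ GL(n,k) such that A = X·diag(−i·I_{n/2}, i·I_{n/2})·X⁻¹ and Xᵀ·M·X has the block form [[0, X₁],[X₁, 0]] where X₁ is an invertible diagonal (n/2)×(n/2) matrix over k. -/

import Mathlib

open Matrix

set_option maxHeartbeats 1000000 in
/-- Structure of Type 3 involutions when `i = √-1 ∈ k`: if `A ∈ O(n,k,β)` with `A² = -I`,
then `n` is even, `A = X · diag(-i·I, i·I) · X⁻¹` with `XᵀMX = [[0, X₁],[X₁, 0]]`,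
`X₁` invertible diagonal. -/
theorem type3_structure_i_in_k {k : Type*} [Field k]
    (hchar : (2 : k) ≠ 0) {n : ℕ} (hn : 2 < n)
    (M : Matrix (Fin n) (Fin n) k) (hMdiag : M.IsDiag) (hM : IsUnit M)
    (i : k) (hi : i ^ 2 = -1)
    (A : Matrix (Fin n) (Fin n) k) (hAorth : Aᵀ * M * A = M) (hA2 : A * A = -1) :
    ∃ (m : ℕ) (hm : n = m + m) (X : Matrix (Fin n) (Fin n) k), IsUnit X ∧
      A = X * (Matrix.reindex (finSumFinEquiv.trans (finCongr hm.symm))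
          (finSumFinEquiv.trans (finCongr hm.symm))
          (Matrix.fromBlocks ((-i) • (1 : Matrix (Fin m) (Fin m) k)) 0 0
            (i • (1 : Matrix (Fin m) (Fin m) k)))) * X⁻¹ ∧
      ∃ X₁ : Matrix (Fin m) (Fin m) k, IsUnit X₁ ∧ X₁.IsDiag ∧
        Xᵀ * M * X = Matrix.reindex (finSumFinEquiv.trans (finCongr hm.symm))
          (finSumFinEquiv.trans (finCongr hm.symm)) (Matrix.fromBlocks 0 X₁ X₁ 0) := by
  classical
  have hi0 : i ≠ 0 := by rintro rfl; norm_num at hi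
  have hMdet : IsUnit M.det := (Matrix.isUnit_iff_isUnit_det M).mp hM
  have hMsymm : Mᵀ = M := hMdiag.isSymm
  -- symmetry of the pairing
  have hBsymm : ∀ v w : Fin n → k, v ⬝ᵥ M *ᵥ w = w ⬝ᵥ M *ᵥ v := by
    intro v w
    rw [Matrix.dotProduct_mulVec, ← Matrix.mulVec_transpose, hMsymm, dotProduct_comm]
  -- nondegeneracy
  have hBnd : ∀ v : Fin n → k, (∀ w, v ⬝ᵥ M *ᵥ w = 0) → v = 0 := by
    intro v hv
    have h1 : v ᵥ* M = 0 := by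
      funext j
      have h := hv (Pi.single j 1)
      rw [Matrix.dotProduct_mulVec, dotProduct_single, mul_one] at h
      simpa using h
    have h2 := congrArg (fun u => u ᵥ* M⁻¹) h1
    simpa [Matrix.vecMul_vecMul, Matrix.mul_nonsing_inv M hMdet] using h2
  -- invariance of the pairing under A
  have hBinv : ∀ v w : Fin n → k, (A *ᵥ v) ⬝ᵥ M *ᵥ (A *ᵥ w) = v ⬝ᵥ M *ᵥ w := by
    intro v w
    rw [Matrix.mulVec_mulVec, Matrix.dotProduct_mulVec, ← Matrix.vecMul_transpose,
      Matrix.vecMul_vecMul, ← Matrix.mul_assoc, hAorth, ← Matrix.dotProduct_mulVec]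
  have hA2v : ∀ v : Fin n → k, A *ᵥ (A *ᵥ v) = -v := by
    intro v
    rw [Matrix.mulVec_mulVec, hA2, Matrix.neg_mulVec, Matrix.one_mulVec]
  -- eigenvectors for eigenvalues with square -1 are isotropic
  have hiso : ∀ lam : k, lam * lam = -1 → ∀ v w : Fin n → k, A *ᵥ v = lam • v →
      A *ᵥ w = lam • w → v ⬝ᵥ M *ᵥ w = 0 := by
    intro lam hlam v w hv hw
    have h1 := hBinv v w
    rw [hv, hw, Matrix.mulVec_smul, smul_dotProduct, dotProduct_smul,
      smul_eq_mul, smul_eq_mul, ← mul_assoc, hlam, neg_one_mul] at h1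
    have h2 : (2:k) * (v ⬝ᵥ M *ᵥ w) = 0 := by linear_combination -h1
    exact (mul_eq_zero.mp h2).resolve_left hchar
  have hii : i * i = -1 := by rw [← sq]; exact hi
  have hnii : (-i) * (-i) = -1 := by linear_combination hi
  -- the eigenspaces
  let Vm : Submodule k (Fin n → k) := LinearMap.ker (A.mulVecLin + i • LinearMap.id)
  let Vp : Submodule k (Fin n → k) := LinearMap.ker (A.mulVecLin - i • LinearMap.id)
  have hVm : ∀ v, v ∈ Vm ↔ A *ᵥ v = (-i) • v := by
    intro v
    simp only [Vm, LinearMap.mem_ker, LinearMap.add_apply, LinearMap.smul_apply,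
      LinearMap.id_apply, Matrix.mulVecLin_apply, neg_smul, add_eq_zero_iff_eq_neg]
  have hVp : ∀ v, v ∈ Vp ↔ A *ᵥ v = i • v := by
    intro v
    simp only [Vp, LinearMap.mem_ker, LinearMap.sub_apply, LinearMap.smul_apply,
      LinearMap.id_apply, Matrix.mulVecLin_apply, sub_eq_zero]
  have h2i : (2 * i) ≠ 0 := mul_ne_zero hchar hi0
  have hcompl : IsCompl Vm Vp := by
    constructor
    · rw [Submodule.disjoint_def]
      intro v hvm hvp
      rw [hVm] at hvm; rw [hVp] at hvp
      have h0 : (i - -i) • v = 0 := by rw [sub_smul, ← hvm, ← hvp, sub_self]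
      have hne : i - -i ≠ 0 := by rw [sub_neg_eq_add, ← two_mul]; exact h2i
      exact (smul_eq_zero.mp h0).resolve_left hne
    · rw [codisjoint_iff, eq_top_iff]
      intro v _
      have hm : i • v - A *ᵥ v ∈ Vm := by
        rw [hVm, Matrix.mulVec_sub, Matrix.mulVec_smul, hA2v]
        match_scalars <;>
        first
        | ring1
        | linear_combination hi
        | linear_combination -hi
      have hp : i • v + A *ᵥ v ∈ Vp := by
        rw [hVp, Matrix.mulVec_add, Matrix.mulVec_smul, hA2v]
        match_scalars <;>
        first
        | ring1
        | linear_combination hi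
        | linear_combination -hi
      refine Submodule.mem_sup.mpr ⟨(2*i)⁻¹ • (i • v - A *ᵥ v), Vm.smul_mem _ hm,
        (2*i)⁻¹ • (i • v + A *ᵥ v), Vp.smul_mem _ hp, ?_⟩
      rw [← smul_add]
      match_scalars
      · field_simp
        ring
      · ring
  -- a vector orthogonal to both eigenspaces is zero
  have hkill : ∀ v : Fin n → k, (∀ w ∈ Vm, v ⬝ᵥ M *ᵥ w = 0) →
      (∀ w ∈ Vp, v ⬝ᵥ M *ᵥ w = 0) → v = 0 := by
    intro v h1 h2
    apply hBnd
    intro w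
    have hw : w ∈ Vm ⊔ Vp := by rw [hcompl.codisjoint.eq_top]; exact Submodule.mem_top
    obtain ⟨wm, hwm, wp, hwp, rfl⟩ := Submodule.mem_sup.mp hw
    rw [Matrix.mulVec_add, dotProduct_add, h1 wm hwm, h2 wp hwp, add_zero]
  -- orthogonality to a subspace can be checked on a basis
  have hspan : ∀ (V : Submodule k (Fin n → k)) {ι : Type} (b : Module.Basis ι k V) (v : Fin n → k),
      (∀ j, v ⬝ᵥ M *ᵥ (b j : Fin n → k) = 0) → ∀ w ∈ V, v ⬝ᵥ M *ᵥ w = 0 := by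
    intro V ι b v hv w hw
    let L : V →ₗ[k] k :=
      { toFun := fun w => v ⬝ᵥ M *ᵥ (w : Fin n → k)
        map_add' := by intro a c; simp [Matrix.mulVec_add, dotProduct_add]
        map_smul' := by intro c a; simp [Matrix.mulVec_smul, dotProduct_smul] }
    have hL : L = 0 := b.ext (by intro j; simpa [L] using hv j)
    simpa [L] using congrArg (fun F : V →ₗ[k] k => F ⟨w, hw⟩) hL
  -- dimensions
  set q := Module.finrank k Vm with hq
  set p := Module.finrank k Vp with hp
  let bm : Module.Basis (Fin q) k Vm := Module.finBasis k Vm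
  let bp : Module.Basis (Fin p) k Vp := Module.finBasis k Vp
  -- pairing maps
  let Φ : Vp →ₗ[k] (Fin q → k) :=
    { toFun := fun v => fun j => (v : Fin n → k) ⬝ᵥ M *ᵥ (bm j : Fin n → k)
      map_add' := by intro x y; funext j; simp [add_dotProduct]
      map_smul' := by intro c x; funext j; simp [smul_dotProduct] }
  let Ψ : Vm →ₗ[k] (Fin p → k) :=
    { toFun := fun v => fun j => (v : Fin n → k) ⬝ᵥ M *ᵥ (bp j : Fin n → k)
      map_add' := by intro x y; funext j; simp [add_dotProduct]
      map_smul' := by intro c x; funext j; simp [smul_dotProduct] }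
  have hΦinj : Function.Injective Φ := by
    refine (injective_iff_map_eq_zero Φ).mpr ?_
    intro x hx
    have hv0 : (x : Fin n → k) = 0 := by
      apply hkill
      · exact hspan Vm bm _ (fun j => congrFun hx j)
      · intro w hw
        exact hiso i hii _ w ((hVp _).mp x.2) ((hVp _).mp hw)
    exact Submodule.coe_eq_zero.mp hv0
  have hΨinj : Function.Injective Ψ := by
    refine (injective_iff_map_eq_zero Ψ).mpr ?_
    intro x hx
    have hv0 : (x : Fin n → k) = 0 := by
      apply hkill
      · intro w hw
        exact hiso (-i) hnii _ w ((hVm _).mp x.2) ((hVm _).mp hw)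
      · exact hspan Vp bp _ (fun j => congrFun hx j)
    exact Submodule.coe_eq_zero.mp hv0
  have hfinfun : ∀ r : ℕ, Module.finrank k (Fin r → k) = r := by
    intro r; simp [Module.finrank_pi]
  have hpq : p = q := by
    have h1 : p ≤ q := by
      have := LinearMap.finrank_le_finrank_of_injective hΦinj
      rwa [hfinfun, ← hp] at this
    have h2 : q ≤ p := by
      have := LinearMap.finrank_le_finrank_of_injective hΨinj
      rwa [hfinfun, ← hq] at this
    exact le_antisymm h1 h2
  have hm : n = q + q := by
    have hsum := Submodule.finrank_add_eq_of_isCompl hcompl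
    rw [← hq, ← hp, hpq, hfinfun] at hsum
    exact hsum.symm
  -- the dual family in Vp
  have hdim : Module.finrank k Vp = Module.finrank k (Fin q → k) := by rw [← hp, hpq, hfinfun]
  let ΦE : Vp ≃ₗ[k] (Fin q → k) := Φ.linearEquivOfInjective hΦinj hdim
  let g : Fin q → Vp := fun j => ΦE.symm (Pi.single j 1)
  have hg : ∀ l j, (g l : Fin n → k) ⬝ᵥ M *ᵥ (bm j : Fin n → k) = (Pi.single l 1 : Fin q → k) j := by
    intro l j
    have : Φ (g l) = Pi.single l 1 := by
      have := ΦE.apply_symm_apply (Pi.single l 1)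
      simpa [ΦE, g, Φ.linearEquivOfInjective_apply] using this
    exact congrFun this j
  let gB : Module.Basis (Fin q) k Vp := (Pi.basisFun k (Fin q)).map ΦE.symm
  have hgB : ∀ j, gB j = g j := by
    intro j
    simp [gB, g, Module.Basis.map_apply]
  -- the full basis
  let e : Fin q ⊕ Fin q ≃ Fin n := finSumFinEquiv.trans (finCongr hm.symm)
  let c : Fin q ⊕ Fin q → (Fin n → k) :=
    Sum.elim (fun j => (bm j : Fin n → k)) (fun j => (g j : Fin n → k))
  let bFull : Module.Basis (Fin q ⊕ Fin q) k (Fin n → k) :=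
    (bm.prod gB).map (Submodule.prodEquivOfIsCompl _ _ hcompl)
  have hbc : ∀ s, (bFull s : Fin n → k) = c s := by
    intro s
    cases s with
    | inl j =>
      simp [bFull, c, Module.Basis.prod_apply, Submodule.coe_prodEquivOfIsCompl']
    | inr j =>
      simp [bFull, c, Module.Basis.prod_apply, Submodule.coe_prodEquivOfIsCompl', hgB]
  let bN : Module.Basis (Fin n) k (Fin n → k) := bFull.reindex e
  have hbN : ∀ j, bN j = c (e.symm j) := by
    intro j; rw [Module.Basis.reindex_apply, hbc]
  let X : Matrix (Fin n) (Fin n) k := (Pi.basisFun k (Fin n)).toMatrix ⇑bN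
  have hXcol : ∀ r j, X r j = bN j r := by
    intro r j
    simp [X, Module.Basis.toMatrix_apply]
  have hXunit : IsUnit X := by
    letI := (Pi.basisFun k (Fin n)).invertibleToMatrix bN
    exact isUnit_of_invertible X
  -- eigenvalue data
  let dl : Fin q ⊕ Fin q → k := Sum.elim (fun _ => -i) (fun _ => i)
  have hAc : ∀ s, A *ᵥ c s = dl s • c s := by
    intro s
    cases s with
    | inl j => exact (hVm _).mp (bm j).2
    | inr j => exact (hVp _).mp (g j).2
  -- the diagonal matrix
  have hD : (Matrix.reindex e e
      (Matrix.fromBlocks ((-i) • (1 : Matrix (Fin q) (Fin q) k)) 0 0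
        (i • (1 : Matrix (Fin q) (Fin q) k)))) = Matrix.diagonal (dl ∘ e.symm) := by
    rw [Matrix.smul_one_eq_diagonal, Matrix.smul_one_eq_diagonal, Matrix.fromBlocks_diagonal,
      Matrix.reindex_apply, Matrix.submatrix_diagonal_equiv]
  have hAX : A * X = X * Matrix.diagonal (dl ∘ e.symm) := by
    ext r j
    have h1 : (A * X) r j = (A *ᵥ c (e.symm j)) r := by
      simp only [Matrix.mul_apply, Matrix.mulVec, dotProduct]
      refine Finset.sum_congr rfl fun l _ => ?_
      rw [hXcol, hbN]
    rw [h1, hAc, Matrix.mul_diagonal, hXcol, hbN]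
    simp only [Pi.smul_apply, smul_eq_mul, Function.comp_apply]
    exact mul_comm _ _
  have hXdet : IsUnit X.det := (Matrix.isUnit_iff_isUnit_det X).mp hXunit
  have hXinv : X * X⁻¹ = 1 := Matrix.mul_nonsing_inv X hXdet
  refine ⟨q, hm, X, hXunit, ?_, 1, isUnit_one, Matrix.isDiag_one, ?_⟩
  · rw [hD, ← hAX, Matrix.mul_assoc, hXinv, Matrix.mul_one]
  · ext j l
    have h1 : (Xᵀ * M * X) j l = (c (e.symm j)) ⬝ᵥ M *ᵥ (c (e.symm l)) := by
      rw [Matrix.mul_assoc]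
      simp only [Matrix.mul_apply, Matrix.transpose_apply, Matrix.mulVec, dotProduct]
      refine Finset.sum_congr rfl fun r _ => ?_
      rw [hXcol, hbN]
      congr 1
      refine Finset.sum_congr rfl fun s _ => ?_
      rw [hXcol, hbN]
    rw [h1, Matrix.reindex_apply, Matrix.submatrix_apply]
    rcases hsj : e.symm j with s | s <;> rcases hsl : e.symm l with t | t
    · rw [Matrix.fromBlocks_apply₁₁]
      exact hiso (-i) hnii _ _ ((hVm _).mp (bm s).2) ((hVm _).mp (bm t).2)
    · rw [Matrix.fromBlocks_apply₁₂]
      show (bm s : Fin n → k) ⬝ᵥ M *ᵥ (g t : Fin n → k) = (1 : Matrix (Fin q) (Fin q) k) s t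
      rw [hBsymm, hg]
      simp [Pi.single_apply, Matrix.one_apply, eq_comm]
    · rw [Matrix.fromBlocks_apply₂₁]
      show (g s : Fin n → k) ⬝ᵥ M *ᵥ (bm t : Fin n → k) = (1 : Matrix (Fin q) (Fin q) k) s t
      rw [hg]
      simp [Pi.single_apply, Matrix.one_apply, eq_comm]
    · rw [Matrix.fromBlocks_apply₂₂]
      exact hiso i hii _ _ ((hVp _).mp (g s).2) ((hVp _).mp (g t).2)
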